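/- Let X be a separable Banach space, Y a Banach space, G ⊆ X open, and f : G → Y an arbitrary mapping. Then there exists a σ-directionally porous set A ⊆ G such that for every x ∈ G \ A: if f is Lipschitz at x and the one-sided directional derivative f'₊(x,u) exists for all u in a set S_x ⊆ X whose linear span is dense in X, then f is Gâteaux differentiable at x. -/

import Mathlib

set_option maxHeartbeats 1000000



open Filter Topology Set Metric

section Defs
variable {X Y : Type*} [NormedAddCommGroup X] [NormedSpace ℝ X]
  [NormedAddCommGroup Y] [NormedSpace ℝ Y]

/-- One-sided directional derivative: `f'₊(x,v) = L`. -/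
def HasPosDirDeriv (f : X → Y) (x v : X) (L : Y) : Prop :=
  Tendsto (fun t : ℝ => t⁻¹ • (f (x + t • v) - f x)) (𝓝[>] (0:ℝ)) (𝓝 L)

/-- Two-sided directional derivative: `f'(x,v) = L`. -/
def HasDirDeriv (f : X → Y) (x v : X) (L : Y) : Prop :=
  Tendsto (fun t : ℝ => t⁻¹ • (f (x + t • v) - f x)) (𝓝[≠] (0:ℝ)) (𝓝 L)

/-- One-sided Hadamard directional derivative: `f'_{H+}(x,v) = L`. -/
def HasHadamardPosDirDeriv (f : X → Y) (x v : X) (L : Y) : Prop :=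
  Tendsto (fun p : X × ℝ => p.2⁻¹ • (f (x + p.2 • p.1) - f x))
    ((𝓝 v) ×ˢ (𝓝[>] (0:ℝ))) (𝓝 L)

/-- Two-sided Hadamard directional derivative: `f'_H(x,v) = L`. -/
def HasHadamardDirDeriv (f : X → Y) (x v : X) (L : Y) : Prop :=
  Tendsto (fun p : X × ℝ => p.2⁻¹ • (f (x + p.2 • p.1) - f x))
    ((𝓝 v) ×ˢ (𝓝[≠] (0:ℝ))) (𝓝 L)

/-- `f` is Lipschitz at the point `x`: `limsup_{y→x} ‖f y - f x‖/‖y-x‖ < ∞`. -/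
def LipschitzAtPt (f : X → Y) (x : X) : Prop :=
  ∃ K δ : ℝ, 0 < δ ∧ ∀ y, ‖y - x‖ < δ → ‖f y - f x‖ ≤ K * ‖y - x‖

/-- `A` is porous at `x` in the direction `v`. -/
def PorousAt (A : Set X) (x v : X) : Prop :=
  ∃ p > (0:ℝ), ∃ t : ℕ → ℝ, (∀ n, 0 < t n) ∧ Tendsto t atTop (𝓝 0) ∧
    ∀ n, ball (x + t n • v) (p * t n) ∩ A = ∅

/-- `A` is directionally porous. -/
def DirectionallyPorous (A : Set X) : Prop :=
  ∀ x ∈ A, ∃ v : X, v ≠ 0 ∧ PorousAt A x v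

/-- `A` is σ-directionally porous. -/
def SigmaDirectionallyPorous (A : Set X) : Prop :=
  ∃ s : ℕ → Set X, (∀ n, DirectionallyPorous (s n)) ∧ A = ⋃ n, s n

/-- The open cone `C(x,v,δ)`. -/
def Cone (x v : X) (δ : ℝ) : Set X :=
  {y : X | y ≠ x ∧ ‖v - ‖y - x‖⁻¹ • (y - x)‖ < δ}

/-- `f` is Hadamard differentiable at `x` with derivative `L`: the difference quotients
converge to `L v` uniformly in `v` from each compact set. -/
def HadamardDifferentiableAt (f : X → Y) (x : X) (L : X →L[ℝ] Y) : Prop :=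
  ∀ C : Set X, IsCompact C →
    TendstoUniformlyOn (fun (t : ℝ) (v : X) => t⁻¹ • (f (x + t • v) - f x))
      (fun v => L v) (𝓝[≠] (0:ℝ)) C

end Defs


section Aux

variable {X Y : Type*} [NormedAddCommGroup X] [NormedSpace ℝ X]
  [NormedAddCommGroup Y] [NormedSpace ℝ Y]

/-- pointwise Lipschitz with explicit constants -/
def LipAt (f : X → Y) (K δ : ℝ) (x : X) : Prop :=
  ∀ y, ‖y - x‖ < δ → ‖f y - f x‖ ≤ K * ‖y - x‖

/-- uniform cone regularity -/
def RegC (f : X → Y) (x v : X) (L : Y) (ε r ρ : ℝ) : Prop :=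
  ∀ t (w : X), 0 < t → t < r → ‖w - v‖ ≤ ρ → ‖f (x + t • w) - f x - t • L‖ ≤ ε * t

/-- bad behavior at arbitrarily small scales -/
def BadC (f : X → Y) (x v : X) (L : Y) (a η : ℝ) : Prop :=
  ∀ n : ℕ, ∃ t, ∃ w : X, 0 < t ∧ t < 1/(n+1 : ℝ) ∧ ‖w - v‖ ≤ η ∧
    a * t ≤ ‖f (x + t • w) - f x - t • L‖

def P1 (f : X → Y) (K δ ε r η : ℝ) : Set X :=
  {x | 1 ≤ K ∧ 0 < δ ∧ 0 < ε ∧ 0 < r ∧ 0 < η ∧ ε ≤ K * η ∧ LipAt f K δ x ∧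
    ∃ v L, RegC f x v L ε r 0 ∧ BadC f x v L (5*K*η) η}

def P2 (f : X → Y) (K δ r η : ℝ) (vi : X) : Set X :=
  {x | 1 ≤ K ∧ 0 < δ ∧ 0 < r ∧ 0 < η ∧ LipAt f K δ x ∧
    ∃ v L, ‖v - vi‖ ≤ η/400 ∧ RegC f x v L (K*η/10) r (η/100) ∧
      BadC f x (-v) (-L) (2*K*η) η}

def P3 (f : X → Y) (K δ ε r : ℝ) (vj : X) : Set X :=
  {x | 1 ≤ K ∧ 0 < δ ∧ 0 < ε ∧ ε ≤ K ∧ 0 < r ∧ LipAt f K δ x ∧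
    ∃ u v Lu Lv, ‖u‖ = 1 ∧ ‖v - vj‖ ≤ ε/(40*K) ∧
      RegC f x u Lu ε r (ε/(10*K)) ∧ RegC f x v Lv ε r (ε/(10*K)) ∧
      BadC f x (u+v) (Lu+Lv) (7*ε) 0}

/-- norm bound on the derivative from regularity plus Lipschitz -/
lemma norm_L_le {f : X → Y} {x v : X} {L : Y} {K δ ε r ρ : ℝ} (hδ : 0 < δ) (hr : 0 < r)
    (hρ : 0 ≤ ρ) (hK : 0 ≤ K) (hε : 0 ≤ ε) (hLip : LipAt f K δ x)
    (hReg : RegC f x v L ε r ρ) : ‖L‖ ≤ K * ‖v‖ + ε := by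
  set t := min r (δ/(‖v‖+1)) / 2 with ht_def
  have hv1 : (0:ℝ) < ‖v‖ + 1 := by positivity
  have ht0 : 0 < t := by
    apply div_pos _ two_pos
    exact lt_min hr (by positivity)
  have htr : t < r := by
    have : t ≤ r / 2 := by
      apply div_le_div_of_nonneg_right (min_le_left _ _) (by norm_num)
    linarith
  have htδ : t * ‖v‖ < δ := by
    have h1 : t ≤ (δ/(‖v‖+1))/2 :=
      div_le_div_of_nonneg_right (min_le_right _ _) (by norm_num)
    have h2 : t * ‖v‖ ≤ (δ/(‖v‖+1))/2 * ‖v‖ :=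
      mul_le_mul_of_nonneg_right h1 (norm_nonneg v)
    have h3 : (δ/(‖v‖+1))/2 * ‖v‖ < δ := by
      rw [div_div]
      rw [div_mul_eq_mul_div, div_lt_iff₀ (by positivity)]
      nlinarith [norm_nonneg v]
    linarith
  have hreg := hReg t v ht0 htr (by simp [hρ])
  have hlip : ‖f (x + t • v) - f x‖ ≤ K * (t * ‖v‖) := by
    have := hLip (x + t • v) (by
      rw [add_sub_cancel_left, norm_smul, Real.norm_eq_abs, abs_of_pos ht0]
      exact htδ)
    rwa [add_sub_cancel_left, norm_smul, Real.norm_eq_abs, abs_of_pos ht0] at this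
  have key : ‖t • L‖ ≤ K * (t * ‖v‖) + ε * t := by
    have h4 := norm_sub_le (f (x + t • v) - f x) ((f (x + t • v) - f x) - t • L)
    have he : (f (x + t • v) - f x) - ((f (x + t • v) - f x) - t • L) = t • L := by abel
    rw [he] at h4
    linarith
  rw [norm_smul, Real.norm_eq_abs, abs_of_pos ht0] at key
  have := (mul_le_mul_iff_right₀ ht0).mp (by linarith [key] : t * ‖L‖ ≤ t * (K * ‖v‖ + ε))
  linarith [this]

/-- construct porosity from scale-wise avoiding balls -/
lemma porousAt_of_small {A : Set X} {x v : X} {p c : ℝ} (hp : 0 < p) (hc : 0 < c)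
    (H : ∀ n : ℕ, ∃ t : ℝ, 0 < t ∧ t < min c (1/(n+1 : ℝ)) ∧
      ball (x + t • v) (p * t) ∩ A = ∅) :
    PorousAt A x v := by
  choose t ht0 htlt hball using H
  refine ⟨p, hp, t, ht0, ?_, hball⟩
  have h1 : Tendsto (fun n : ℕ => 1/(n+1 : ℝ)) atTop (𝓝 0) :=
    tendsto_one_div_add_atTop_nhds_zero_nat
  apply squeeze_zero (fun n => (ht0 n).le)
    (fun n => ((htlt n).le.trans (min_le_right _ _)))
  exact h1

lemma exists_small_scale {c : ℝ} (hc : 0 < c) (n : ℕ) :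
    ∃ m : ℕ, 1/(m+1 : ℝ) ≤ min c (1/(n+1 : ℝ)) := by
  obtain ⟨m, hm⟩ := exists_nat_one_div_lt (lt_min hc (by positivity) :
    (0:ℝ) < min c (1/(n+1 : ℝ)))
  exact ⟨m, hm.le⟩

end Aux

section Poro

variable {X Y : Type*} [NormedAddCommGroup X] [NormedSpace ℝ X]
  [NormedAddCommGroup Y] [NormedSpace ℝ Y]

lemma dp_P1 (f : X → Y) (K δ ε r η : ℝ) : DirectionallyPorous (P1 f K δ ε r η) := by
  rintro x ⟨hK, hδ, hε, hr, hη, hεK, hLip, v, L, hReg, hBad⟩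
  have hK0 : (0:ℝ) < K := lt_of_lt_of_le one_pos hK
  have hL : ‖L‖ ≤ K * ‖v‖ + ε := norm_L_le hδ hr le_rfl hK0.le hε.le hLip hReg
  -- lower bound on ‖v‖
  have hv32 : (3/2) * η ≤ ‖v‖ := by
    obtain ⟨m, hm⟩ := exists_nat_one_div_lt
      (lt_min hr (div_pos hδ (by positivity)) : (0:ℝ) < min r (δ/(‖v‖ + η + 1)))
    obtain ⟨t, w, ht0, htlt, hw, hbig⟩ := hBad m
    have htr : t < r := htlt.trans (hm.trans_le (min_le_left _ _))
    have htδ : t < δ/(‖v‖ + η + 1) := htlt.trans (hm.trans_le (min_le_right _ _))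
    have hwv : ‖w‖ ≤ ‖v‖ + η := by
      have h := norm_add_le (w - v) v
      have h2 : (w - v) + v = w := by abel
      rw [h2] at h
      linarith [h, hw]
    have htwδ : t * ‖w‖ < δ := by
      have h5 : t * (‖v‖ + η + 1) < δ := (lt_div_iff₀ (by positivity)).mp htδ
      nlinarith [norm_nonneg w, ht0.le]
    have hlipb : ‖f (x + t • w) - f x‖ ≤ K * (t * ‖w‖) := by
      have hy : ‖(x + t • w) - x‖ < δ := by
        rw [add_sub_cancel_left, norm_smul, Real.norm_eq_abs, abs_of_pos ht0]
        exact htwδ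
      have := hLip (x + t • w) hy
      rwa [add_sub_cancel_left, norm_smul, Real.norm_eq_abs, abs_of_pos ht0] at this
    have htri : ‖f (x + t • w) - f x - t • L‖ ≤ ‖f (x + t • w) - f x‖ + ‖t • L‖ :=
      norm_sub_le _ _
    rw [norm_smul, Real.norm_eq_abs, abs_of_pos ht0] at htri
    -- 5Kηt ≤ Kt(‖v‖+η) + t(K‖v‖+ε)
    have hKt : 0 < K * t := mul_pos hK0 ht0
    have h2 : (K*t) * (3*η) ≤ (K*t) * (2*‖v‖) := by nlinarith [norm_nonneg w, norm_nonneg v]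
    have h3 := le_of_mul_le_mul_left h2 hKt
    linarith
  have hvne : v ≠ 0 := by
    intro h
    rw [h, norm_zero] at hv32
    nlinarith
  have hp : (0:ℝ) < η/2 := by positivity
  have hc : (0:ℝ) < min r (δ/(2*(1+η))) := lt_min hr (by positivity)
  refine ⟨v, hvne, porousAt_of_small hp hc ?_⟩
  intro n
  obtain ⟨m, hm⟩ := exists_small_scale hc n
  obtain ⟨t, w, ht0, htlt, hw, hbig⟩ := hBad m
  have htc : t < min (min r (δ/(2*(1+η)))) (1/(n+1 : ℝ)) := htlt.trans_le hm
  refine ⟨t, ht0, htc, ?_⟩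
  rw [eq_empty_iff_forall_notMem]
  rintro z ⟨hzball, hz⟩
  obtain ⟨-, -, -, -, -, -, hLipz, -⟩ := hz
  have htr : t < r := htc.trans_le ((min_le_left _ _).trans (min_le_left _ _))
  have htδ2 : t < δ/(2*(1+η)) := htc.trans_le ((min_le_left _ _).trans (min_le_right _ _))
  have htδ2' : t * (2*(1+η)) < δ := by
    rw [← lt_div_iff₀ (by positivity)]
    exact htδ2
  have hzx : ‖z - (x + t • v)‖ < (η/2) * t := by
    rw [mem_ball, dist_eq_norm] at hzball
    exact hzball
  have hzx' : ‖(x + t • v) - z‖ ≤ (η/2) * t := by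
    rw [norm_sub_rev]; exact hzx.le
  -- z-Lipschitz at x + t•v
  have h2 : ‖f (x + t • v) - f z‖ ≤ K * ((η/2)*t) := by
    have hy : ‖(x + t • v) - z‖ < δ := by
      refine hzx'.trans_lt ?_
      nlinarith
    refine (hLipz _ hy).trans ?_
    exact mul_le_mul_of_nonneg_left hzx' hK0.le
  -- z-Lipschitz at the bad point
  have h1n : ‖(x + t • w) - z‖ ≤ (η + η/2) * t := by
    have e1 : (x + t • w) - z = (t • w - t • v) + ((x + t • v) - z) := by abel
    have e2 : ‖t • w - t • v‖ ≤ η * t := by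
      rw [← smul_sub, norm_smul, Real.norm_eq_abs, abs_of_pos ht0]
      calc t * ‖w - v‖ ≤ t * η := mul_le_mul_of_nonneg_left hw ht0.le
        _ = η * t := mul_comm _ _
    calc ‖(x + t • w) - z‖ ≤ ‖t • w - t • v‖ + ‖(x + t • v) - z‖ := by
          rw [e1]; exact norm_add_le _ _
      _ ≤ η * t + (η/2) * t := add_le_add e2 hzx'
      _ = (η + η/2) * t := by ring
  have h1 : ‖f (x + t • w) - f z‖ ≤ K * ((η + η/2)*t) := by
    have hy : ‖(x + t • w) - z‖ < δ := by
      refine h1n.trans_lt ?_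
      nlinarith
    refine (hLipz _ hy).trans ?_
    exact mul_le_mul_of_nonneg_left h1n hK0.le
  have h3 : ‖f (x + t • v) - f x - t • L‖ ≤ ε*t := hReg t v ht0 htr (by simp)
  have hdec : f (x + t • w) - f x - t • L =
      ((f (x + t • w) - f z) + (f z - f (x + t • v))) + (f (x + t • v) - f x - t • L) := by
    abel
  have hfin : ‖f (x + t • w) - f x - t • L‖ ≤ K*((η + η/2)*t) + K*((η/2)*t) + ε*t := by
    rw [hdec]
    calc ‖((f (x + t • w) - f z) + (f z - f (x + t • v))) + (f (x + t • v) - f x - t • L)‖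
        ≤ ‖(f (x + t • w) - f z) + (f z - f (x + t • v))‖ + ‖f (x + t • v) - f x - t • L‖ :=
          norm_add_le _ _
      _ ≤ (‖f (x + t • w) - f z‖ + ‖f z - f (x + t • v)‖) + ‖f (x + t • v) - f x - t • L‖ := by
          gcongr; exact norm_add_le _ _
      _ ≤ K*((η + η/2)*t) + K*((η/2)*t) + ε*t := by
          rw [norm_sub_rev (f z)]
          linarith [h1, h2, h3]
  have hKηt : 0 < K * η * t := by positivity
  nlinarith [hbig, hfin]

end Poro

section Poro2

variable {X Y : Type*} [NormedAddCommGroup X] [NormedSpace ℝ X]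
  [NormedAddCommGroup Y] [NormedSpace ℝ Y]

lemma smul_point_eq (z a : X) {t : ℝ} (ht : t ≠ 0) : z + t • (t⁻¹ • (a - z)) = a := by
  rw [smul_smul, mul_inv_cancel₀ ht, one_smul]; abel

lemma dev_bound {a z v : X} {t ρ : ℝ} (ht : 0 < t) (h : ‖(a - z) - t • v‖ ≤ ρ * t) :
    ‖t⁻¹ • (a - z) - v‖ ≤ ρ := by
  have he : t⁻¹ • (a - z) - v = t⁻¹ • ((a - z) - t • v) := by
    conv_rhs => rw [smul_sub, smul_smul, inv_mul_cancel₀ ht.ne', one_smul]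
  rw [he, norm_smul, Real.norm_eq_abs, abs_of_pos (inv_pos.mpr ht)]
  rw [inv_mul_le_iff₀ ht, mul_comm]
  exact h

lemma dp_P2 (f : X → Y) (K δ r η : ℝ) (vi : X) : DirectionallyPorous (P2 f K δ r η vi) := by
  rintro x ⟨hK, hδ, hr, hη, hLip, v, L, hvi, hReg, hBad⟩
  have hK0 : (0:ℝ) < K := lt_of_lt_of_le one_pos hK
  set ε' : ℝ := K*η/10 with hε'def
  have hε'0 : 0 < ε' := by positivity
  have hL : ‖L‖ ≤ K * ‖v‖ + ε' := norm_L_le hδ hr (by positivity) hK0.le hε'0.le hLip hReg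
  -- lower bound on ‖v‖
  have hv45 : 0.45 * η ≤ ‖v‖ := by
    obtain ⟨m, hm⟩ := exists_nat_one_div_lt
      (lt_min hr (div_pos hδ (by positivity)) : (0:ℝ) < min r (δ/(‖v‖ + η + 1)))
    obtain ⟨t, w, ht0, htlt, hw, hbig⟩ := hBad m
    have htδ : t < δ/(‖v‖ + η + 1) := htlt.trans (hm.trans_le (min_le_right _ _))
    have hwv : ‖w‖ ≤ ‖v‖ + η := by
      have h := norm_add_le (w - (-v)) (-v)
      have h2 : (w - (-v)) + (-v) = w := by abel
      rw [h2, norm_neg] at h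
      linarith [h, hw]
    have htwδ : t * ‖w‖ < δ := by
      have h5 : t * (‖v‖ + η + 1) < δ := (lt_div_iff₀ (by positivity)).mp htδ
      nlinarith [norm_nonneg w, ht0.le]
    have hlipb : ‖f (x + t • w) - f x‖ ≤ K * (t * ‖w‖) := by
      have hy : ‖(x + t • w) - x‖ < δ := by
        rw [add_sub_cancel_left, norm_smul, Real.norm_eq_abs, abs_of_pos ht0]
        exact htwδ
      have := hLip (x + t • w) hy
      rwa [add_sub_cancel_left, norm_smul, Real.norm_eq_abs, abs_of_pos ht0] at this
    have htri : ‖f (x + t • w) - f x - t • (-L)‖ ≤ ‖f (x + t • w) - f x‖ + t * ‖L‖ := by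
      calc ‖f (x + t • w) - f x - t • (-L)‖
          ≤ ‖f (x + t • w) - f x‖ + ‖t • (-L)‖ := norm_sub_le _ _
        _ = ‖f (x + t • w) - f x‖ + t * ‖L‖ := by
            rw [norm_smul, norm_neg, Real.norm_eq_abs, abs_of_pos ht0]
    have hKt : 0 < K * t := mul_pos hK0 ht0
    have h2 : (K*t) * (0.9*η) ≤ (K*t) * (2*‖v‖) := by nlinarith [norm_nonneg w, norm_nonneg v]
    have h3 := le_of_mul_le_mul_left h2 hKt
    linarith
  have hvne : -v ≠ 0 := by
    intro h
    rw [neg_eq_zero] at h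
    rw [h, norm_zero] at hv45
    nlinarith
  have hp : (0:ℝ) < η/400 := by positivity
  have hc : (0:ℝ) < min (r/4) (δ/(2*(1+η))) := lt_min (by positivity) (by positivity)
  refine ⟨-v, hvne, porousAt_of_small hp hc ?_⟩
  intro n
  obtain ⟨m, hm⟩ := exists_small_scale hc n
  obtain ⟨t, w, ht0, htlt, hw, hbig⟩ := hBad m
  have htc : t < min (min (r/4) (δ/(2*(1+η)))) (1/(n+1 : ℝ)) := htlt.trans_le hm
  refine ⟨t, ht0, htc, ?_⟩
  rw [eq_empty_iff_forall_notMem]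
  rintro z ⟨hzball, hz⟩
  obtain ⟨-, -, -, -, hLipz, vz, Lz, hviz, hRegz, -⟩ := hz
  have htr4 : t < r/4 := htc.trans_le ((min_le_left _ _).trans (min_le_left _ _))
  have htδ2 : t < δ/(2*(1+η)) := htc.trans_le ((min_le_left _ _).trans (min_le_right _ _))
  have htδ2' : t * (2*(1+η)) < δ := by
    rw [← lt_div_iff₀ (by positivity)]
    exact htδ2
  have htr : t < r := by linarith
  have hzx : ‖z - (x + t • (-v))‖ < (η/400) * t := by
    rw [mem_ball, dist_eq_norm] at hzball
    exact hzball
  have hzx2 : ‖z - (x - t • v)‖ ≤ (η/400) * t := by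
    rw [smul_neg] at hzx
    have : x + -(t • v) = x - t • v := by abel
    rw [this] at hzx
    exact hzx.le
  -- deviation of v from vz
  have hvvz : ‖v - vz‖ ≤ η/200 := by
    have h1 : ‖v - vz‖ ≤ ‖v - vi‖ + ‖vz - vi‖ := by
      have e : v - vz = (v - vi) - (vz - vi) := by abel
      rw [e]; exact norm_sub_le _ _
    linarith [hvi, hviz]
  -- (a) x = z + t • w₁
  set w₁ : X := t⁻¹ • (x - z) with hw₁def
  have hptx : z + t • w₁ = x := smul_point_eq z x ht0.ne'
  have hw₁v : ‖w₁ - v‖ ≤ η/400 := by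
    apply dev_bound ht0
    have e : (x - z) - t • v = -(z - (x - t • v)) := by abel
    rw [e, norm_neg]
    exact hzx2
  have hw₁vz : ‖w₁ - vz‖ ≤ η/100 := by
    have h1 : ‖w₁ - vz‖ ≤ ‖w₁ - v‖ + ‖v - vz‖ := by
      have e : w₁ - vz = (w₁ - v) + (v - vz) := by abel
      rw [e]; exact norm_add_le _ _
    linarith
  have hA : ‖f x - f z - t • Lz‖ ≤ ε' * t := by
    have := hRegz t w₁ ht0 htr hw₁vz
    rwa [hptx] at this
  -- (b) y = x + (r/2) • v = z + (r/2 + t) • w₂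
  set u : ℝ := r/2 with hudef
  have hu0 : 0 < u := by positivity
  have hut0 : 0 < u + t := by linarith
  set y : X := x + u • v with hydef
  set w₂ : X := (u+t)⁻¹ • (y - z) with hw₂def
  have hpty : z + (u+t) • w₂ = y := smul_point_eq z y hut0.ne'
  have hw₂v : ‖w₂ - v‖ ≤ η/400 := by
    apply dev_bound hut0
    have e : (y - z) - (u+t) • v = -(z - (x - t • v)) := by
      rw [hydef, add_smul]; abel
    rw [e, norm_neg]
    refine hzx2.trans ?_
    have : (0:ℝ) ≤ η/400 := by positivity
    nlinarith
  have hw₂vz : ‖w₂ - vz‖ ≤ η/100 := by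
    have h1 : ‖w₂ - vz‖ ≤ ‖w₂ - v‖ + ‖v - vz‖ := by
      have e : w₂ - vz = (w₂ - v) + (v - vz) := by abel
      rw [e]; exact norm_add_le _ _
    linarith
  have hB : ‖f y - f z - (u+t) • Lz‖ ≤ ε' * (u+t) := by
    have := hRegz (u+t) w₂ hut0 (by linarith) hw₂vz
    rwa [hpty] at this
  have hC : ‖f y - f x - u • L‖ ≤ ε' * u := by
    have := hReg u v hu0 (by linarith) (by simp; positivity)
    rwa [← hydef] at this
  -- compare L and Lz
  have hLLz : ‖L - Lz‖ ≤ 3 * ε' := by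
    have hdec : u • L - u • Lz =
        -(f y - f x - u • L) + (f y - f z - (u+t) • Lz) - (f x - f z - t • Lz) := by
      rw [add_smul]; abel
    have hn : ‖u • L - u • Lz‖ ≤ ε' * u + ε' * (u+t) + ε' * t := by
      rw [hdec]
      calc ‖-(f y - f x - u • L) + (f y - f z - (u+t) • Lz) - (f x - f z - t • Lz)‖
          ≤ ‖-(f y - f x - u • L) + (f y - f z - (u+t) • Lz)‖ + ‖f x - f z - t • Lz‖ :=
            norm_sub_le _ _
        _ ≤ ‖-(f y - f x - u • L)‖ + ‖f y - f z - (u+t) • Lz‖ + ‖f x - f z - t • Lz‖ := by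
            gcongr; exact norm_add_le _ _
        _ ≤ ε' * u + ε' * (u+t) + ε' * t := by
            rw [norm_neg]
            linarith [hA, hB, hC]
    rw [← smul_sub, norm_smul, Real.norm_eq_abs, abs_of_pos hu0] at hn
    have ht2u : t ≤ u/2 := by
      rw [hudef]; linarith
    have h2 : u * ‖L - Lz‖ ≤ u * (3*ε') := by nlinarith [hn, ht2u, hε'0.le]
    exact le_of_mul_le_mul_left h2 hu0
  -- (d) bad point
  have hbz : ‖(x + t • w) - z‖ ≤ (η + η/400) * t := by
    have e1 : (x + t • w) - z = (t • w - t • (-v)) + ((x + t • (-v)) - z) := by abel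
    have e2 : ‖t • w - t • (-v)‖ ≤ η * t := by
      rw [← smul_sub, norm_smul, Real.norm_eq_abs, abs_of_pos ht0]
      calc t * ‖w - (-v)‖ ≤ t * η := mul_le_mul_of_nonneg_left hw ht0.le
        _ = η * t := mul_comm _ _
    calc ‖(x + t • w) - z‖ ≤ ‖t • w - t • (-v)‖ + ‖(x + t • (-v)) - z‖ := by
          rw [e1]; exact norm_add_le _ _
      _ ≤ η * t + (η/400) * t := by
          refine add_le_add e2 ?_
          rw [norm_sub_rev]
          exact hzx.le
      _ = (η + η/400) * t := by ring
  have hd : ‖f (x + t • w) - f z‖ ≤ K * ((η + η/400)*t) := by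
    have hy : ‖(x + t • w) - z‖ < δ := by
      refine hbz.trans_lt ?_
      nlinarith
    refine (hLipz _ hy).trans ?_
    exact mul_le_mul_of_nonneg_left hbz hK0.le
  -- final contradiction
  have hdec2 : f (x + t • w) - f x - t • (-L) =
      (f (x + t • w) - f z) + (-(f x - f z - t • Lz)) + t • (L - Lz) := by
    rw [smul_neg, smul_sub]; abel
  have hfin : ‖f (x + t • w) - f x - t • (-L)‖ ≤
      K * ((η + η/400)*t) + ε' * t + t * (3*ε') := by
    rw [hdec2]
    calc ‖(f (x + t • w) - f z) + (-(f x - f z - t • Lz)) + t • (L - Lz)‖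
        ≤ ‖(f (x + t • w) - f z) + (-(f x - f z - t • Lz))‖ + ‖t • (L - Lz)‖ :=
          norm_add_le _ _
      _ ≤ ‖f (x + t • w) - f z‖ + ‖-(f x - f z - t • Lz)‖ + ‖t • (L - Lz)‖ := by
          gcongr; exact norm_add_le _ _
      _ ≤ K * ((η + η/400)*t) + ε' * t + t * (3*ε') := by
          rw [norm_neg, norm_smul, Real.norm_eq_abs, abs_of_pos ht0]
          have := mul_le_mul_of_nonneg_left hLLz ht0.le
          linarith [hd, hA, this]
  have hKηt : 0 < K * η * t := by positivity
  nlinarith [hbig, hfin]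

end Poro2

section Poro3

variable {X Y : Type*} [NormedAddCommGroup X] [NormedSpace ℝ X]
  [NormedAddCommGroup Y] [NormedSpace ℝ Y]

lemma dp_P3 (f : X → Y) (K δ ε r : ℝ) (vj : X) : DirectionallyPorous (P3 f K δ ε r vj) := by
  rintro x ⟨hK, hδ, hε, hεK, hr, hLip, u, v, Lu, Lv, hu1, hvj, hRegu, hRegv, hBad⟩
  have hK0 : (0:ℝ) < K := lt_of_lt_of_le one_pos hK
  set ρ : ℝ := ε/(10*K) with hρdef
  have hρ0 : 0 < ρ := by positivity
  set D : ℝ := 22*K/ε with hDdef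
  have hD1 : (1:ℝ) ≤ D := by
    rw [hDdef]
    rw [le_div_iff₀ hε]
    nlinarith
  have hD0 : (0:ℝ) < D := lt_of_lt_of_le one_pos hD1
  have hLu : ‖Lu‖ ≤ 2*K := by
    have := norm_L_le hδ hr hρ0.le hK0.le hε.le hLip hRegu
    rw [hu1] at this
    linarith
  have hvne : u ≠ 0 := by
    intro h
    rw [h, norm_zero] at hu1
    norm_num at hu1
  have hp : (0:ℝ) < ε/(40*K) := by positivity
  have hc : (0:ℝ) < r/(2*D) := by positivity
  refine ⟨u, hvne, porousAt_of_small hp hc ?_⟩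
  intro n
  obtain ⟨m, hm⟩ := exists_small_scale hc n
  obtain ⟨t, w, ht0, htlt, hw, hbig⟩ := hBad m
  have htc : t < min (r/(2*D)) (1/(n+1 : ℝ)) := htlt.trans_le hm
  refine ⟨t, ht0, htc, ?_⟩
  rw [eq_empty_iff_forall_notMem]
  rintro z ⟨hzball, hz⟩
  obtain ⟨-, -, -, -, -, -, uz, vz, Luz, Lvz, -, hvzj, -, hRegvz, -⟩ := hz
  have hweq : w = u + v := by rwa [norm_le_zero_iff, sub_eq_zero] at hw
  subst hweq
  have htD : t < r/(2*D) := htc.trans_le (min_le_left _ _)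
  have htr : t < r := by
    have : r/(2*D) ≤ r/2 := by
      apply div_le_div_of_nonneg_left hr.le (by positivity)
      linarith
    linarith
  set s : ℝ := D * t with hsdef
  have hs0 : 0 < s := mul_pos hD0 ht0
  have hsr : s < r := by
    have h7 : t * (2*D) < r := by
      rw [← lt_div_iff₀ (by positivity)]
      exact htD
    rw [hsdef]
    nlinarith
  have hzx : ‖z - (x + t • u)‖ < (ε/(40*K)) * t := by
    rw [mem_ball, dist_eq_norm] at hzball
    exact hzball
  have hvvz : ‖v - vz‖ ≤ ε/(20*K) := by
    have h1 : ‖v - vz‖ ≤ ‖v - vj‖ + ‖vz - vj‖ := by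
      have e : v - vz = (v - vj) - (vz - vj) := by abel
      rw [e]; exact norm_sub_le _ _
    have h2 : ε/(40*K) + ε/(40*K) = ε/(20*K) := by ring
    linarith [hvj, hvzj]
  -- (i) z = x + t • w₁
  set w₁ : X := t⁻¹ • (z - x) with hw₁def
  have hptz : x + t • w₁ = z := smul_point_eq x z ht0.ne'
  have hw₁u : ‖w₁ - u‖ ≤ ε/(40*K) := by
    apply dev_bound ht0
    have e : (z - x) - t • u = z - (x + t • u) := by abel
    rw [e]
    exact hzx.le
  have hI : ‖f z - f x - t • Lu‖ ≤ ε * t := by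
    have h40 : ε/(40*K) ≤ ρ := by
      rw [hρdef]
      apply div_le_div_of_nonneg_left hε.le (by positivity)
      nlinarith
    have := hRegu t w₁ ht0 htr (hw₁u.trans h40)
    rwa [hptz] at this
  -- (ii) bad point b = x + t•(u+v) = z + t•w₂
  set b : X := x + t • (u+v) with hbdef
  set w₂ : X := t⁻¹ • (b - z) with hw₂def
  have hptb : z + t • w₂ = b := smul_point_eq z b ht0.ne'
  have hw₂v : ‖w₂ - v‖ ≤ ε/(40*K) := by
    apply dev_bound ht0
    have e : (b - z) - t • v = -(z - (x + t • u)) := by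
      rw [hbdef, smul_add]; abel
    rw [e, norm_neg]
    exact hzx.le
  have hw₂vz : ‖w₂ - vz‖ ≤ ρ := by
    have h1 : ‖w₂ - vz‖ ≤ ‖w₂ - v‖ + ‖v - vz‖ := by
      have e : w₂ - vz = (w₂ - v) + (v - vz) := by abel
      rw [e]; exact norm_add_le _ _
    rw [hρdef]
    have : ε/(40*K) + ε/(20*K) ≤ ε/(10*K) := by
      rw [div_add_div _ _ (by positivity : (40*K:ℝ) ≠ 0) (by positivity : (20*K:ℝ) ≠ 0)]
      rw [div_le_div_iff₀ (by positivity) (by positivity)]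
      ring_nf
      nlinarith
    linarith [h1, hvvz]
  have hII : ‖f b - f z - t • Lvz‖ ≤ ε * t := by
    have := hRegvz t w₂ ht0 htr hw₂vz
    rwa [hptb] at this
  -- (iii) q = z + s•v, two evaluations
  set q : X := z + s • v with hqdef
  have hIII : ‖f q - f z - s • Lvz‖ ≤ ε * s := by
    apply hRegvz s v hs0 hsr
    refine hvvz.trans ?_
    apply div_le_div_of_nonneg_left hε.le (by positivity)
    nlinarith
  set w₃ : X := s⁻¹ • (q - x) with hw₃def
  have hptq : x + s • w₃ = q := smul_point_eq x q hs0.ne'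
  have hw₃v : ‖w₃ - v‖ ≤ ρ := by
    apply dev_bound hs0
    have e : (q - x) - s • v = (z - (x + t • u)) + t • u := by
      rw [hqdef]; abel
    have h1 : ‖(q - x) - s • v‖ ≤ (ε/(40*K)) * t + t := by
      rw [e]
      calc ‖(z - (x + t • u)) + t • u‖ ≤ ‖z - (x + t • u)‖ + ‖t • u‖ := norm_add_le _ _
        _ ≤ (ε/(40*K)) * t + t := by
            rw [norm_smul, Real.norm_eq_abs, abs_of_pos ht0, hu1, mul_one]
            exact add_le_add hzx.le le_rfl
    refine h1.trans ?_
    -- (ε/(40K))t + t ≤ ρ * s = (ε/(10K)) * (22K/ε) * t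
    rw [hρdef, hsdef, hDdef]
    have he40 : (ε/(40*K)) ≤ 1 := by
      rw [div_le_one (by positivity)]
      nlinarith
    have hkey : ε/(10*K) * (22*K/ε * t) = 22/10 * t := by
      field_simp
    rw [hkey]
    nlinarith
  have hIV : ‖f q - f x - s • Lv‖ ≤ ε * s := by
    have := hRegv s w₃ hs0 hsr hw₃v
    rwa [hptq] at this
  -- (v) compare Lvz and Lv
  have hLL : ‖Lvz - Lv‖ ≤ 3 * ε := by
    have hdec : s • Lvz - s • Lv + t • Lu =
        -(f q - f z - s • Lvz) + (f q - f x - s • Lv) - (f z - f x - t • Lu) := by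
      abel
    have hn : ‖s • Lvz - s • Lv + t • Lu‖ ≤ ε*s + ε*s + ε*t := by
      rw [hdec]
      calc ‖-(f q - f z - s • Lvz) + (f q - f x - s • Lv) - (f z - f x - t • Lu)‖
          ≤ ‖-(f q - f z - s • Lvz) + (f q - f x - s • Lv)‖ + ‖f z - f x - t • Lu‖ :=
            norm_sub_le _ _
        _ ≤ ‖-(f q - f z - s • Lvz)‖ + ‖f q - f x - s • Lv‖ + ‖f z - f x - t • Lu‖ := by
            gcongr; exact norm_add_le _ _
        _ ≤ ε*s + ε*s + ε*t := by
            rw [norm_neg]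
            linarith [hIII, hIV, hI]
    have hn2 : ‖s • Lvz - s • Lv‖ ≤ ε*s + ε*s + ε*t + t * ‖Lu‖ := by
      have e : s • Lvz - s • Lv = (s • Lvz - s • Lv + t • Lu) - t • Lu := by abel
      rw [e]
      calc ‖(s • Lvz - s • Lv + t • Lu) - t • Lu‖
          ≤ ‖s • Lvz - s • Lv + t • Lu‖ + ‖t • Lu‖ := norm_sub_le _ _
        _ ≤ ε*s + ε*s + ε*t + t * ‖Lu‖ := by
            rw [norm_smul, Real.norm_eq_abs, abs_of_pos ht0]
            linarith [hn]
    rw [← smul_sub, norm_smul, Real.norm_eq_abs, abs_of_pos hs0] at hn2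
    -- s ‖Lvz - Lv‖ ≤ 2εs + εt + 2Kt  with s = (22K/ε) t
    have hεs : ε * s = 22*K*t := by
      rw [hsdef, hDdef]; field_simp
    have h2 : s * ‖Lvz - Lv‖ ≤ s * (3*ε) := by
      have h3 : t * ‖Lu‖ ≤ 2*K*t := by
        calc t * ‖Lu‖ ≤ t * (2*K) := mul_le_mul_of_nonneg_left hLu ht0.le
          _ = 2*K*t := by ring
      have h4 : s * (3*ε) = 3 * (ε*s) := by ring
      rw [h4, hεs]
      have h5 : ε * t ≤ K * t := mul_le_mul_of_nonneg_right hεK ht0.le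
      have h6 : ε*s + ε*s + ε*t + t*‖Lu‖ ≤ 2*(22*K*t) + K*t + 2*K*t := by
        rw [hεs] at hn2 ⊢
        linarith [h3, h5]
      nlinarith [hn2, h6, hK0, ht0]
    exact le_of_mul_le_mul_left h2 hs0
  -- (vi) final contradiction
  have hdec2 : f b - f x - t • (Lu + Lv) =
      (f b - f z - t • Lvz) + (f z - f x - t • Lu) + t • (Lvz - Lv) := by
    rw [smul_add, smul_sub]; abel
  have hfin : ‖f b - f x - t • (Lu + Lv)‖ ≤ ε*t + ε*t + t * (3*ε) := by
    rw [hdec2]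
    calc ‖(f b - f z - t • Lvz) + (f z - f x - t • Lu) + t • (Lvz - Lv)‖
        ≤ ‖(f b - f z - t • Lvz) + (f z - f x - t • Lu)‖ + ‖t • (Lvz - Lv)‖ :=
          norm_add_le _ _
      _ ≤ ‖f b - f z - t • Lvz‖ + ‖f z - f x - t • Lu‖ + ‖t • (Lvz - Lv)‖ := by
          gcongr; exact norm_add_le _ _
      _ ≤ ε*t + ε*t + t * (3*ε) := by
          rw [norm_smul, Real.norm_eq_abs, abs_of_pos ht0]
          have := mul_le_mul_of_nonneg_left hLL ht0.le
          linarith [hII, hI, this]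
  have hεt : 0 < ε * t := mul_pos hε ht0
  nlinarith [hbig, hfin]

end Poro3

section Cover

variable {X Y : Type*} [NormedAddCommGroup X] [NormedSpace ℝ X]
  [NormedAddCommGroup Y] [NormedSpace ℝ Y]

lemma norm_sub_smul_eq {A L : Y} {t : ℝ} (ht : 0 < t) :
    ‖A - t • L‖ = t * ‖t⁻¹ • A - L‖ := by
  have he : t • (t⁻¹ • A - L) = A - t • L := by
    rw [smul_sub, smul_smul, mul_inv_cancel₀ ht.ne', one_smul]
  rw [← he, norm_smul, Real.norm_eq_abs, abs_of_pos ht]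

lemma eventually_pos_iff {p : ℝ → Prop} :
    (∀ᶠ t in 𝓝[>] (0:ℝ), p t) ↔ ∃ r > 0, ∀ t, 0 < t → t < r → p t := by
  constructor
  · intro h
    obtain ⟨u, hu, hsub⟩ := mem_nhdsGT_iff_exists_Ioo_subset.mp h
    exact ⟨u, hu, fun t ht0 htu => hsub ⟨ht0, htu⟩⟩
  · rintro ⟨r, hr, h⟩
    filter_upwards [Ioo_mem_nhdsGT_of_mem (⟨le_refl (0:ℝ), hr⟩ : (0:ℝ) ∈ Ico (0:ℝ) r)]
      with t ht
    exact h t ht.1 ht.2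

lemma frequently_pos_iff {p : ℝ → Prop} :
    (∃ᶠ t in 𝓝[>] (0:ℝ), p t) ↔ ∀ r > 0, ∃ t, 0 < t ∧ t < r ∧ p t := by
  rw [Filter.Frequently]
  rw [eventually_pos_iff]
  push_neg
  constructor
  · intro h r hr
    obtain ⟨t, ht0, htr, hp⟩ := h r hr
    exact ⟨t, ht0, htr, hp⟩
  · intro h r hr
    obtain ⟨t, ht0, htr, hp⟩ := h r hr
    exact ⟨t, ht0, htr, hp⟩

lemma hasPos_unique {f : X → Y} {x v : X} {L₁ L₂ : Y}
    (h1 : HasPosDirDeriv f x v L₁) (h2 : HasPosDirDeriv f x v L₂) : L₁ = L₂ :=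
  tendsto_nhds_unique h1 h2

lemma hasPos_zero (f : X → Y) (x : X) : HasPosDirDeriv f x 0 0 := by
  unfold HasPosDirDeriv
  have he : (fun t : ℝ => t⁻¹ • (f (x + t • (0:X)) - f x)) = fun _ => (0:Y) := by
    funext t
    simp
  rw [he]
  exact tendsto_const_nhds

lemma tendsto_mul_pos {c : ℝ} (hc : 0 < c) :
    Tendsto (fun t : ℝ => c * t) (𝓝[>] (0:ℝ)) (𝓝[>] (0:ℝ)) := by
  rw [tendsto_nhdsWithin_iff]
  constructor
  · have h : Tendsto (fun t : ℝ => c * t) (𝓝 0) (𝓝 (c * 0)) :=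
      (continuous_const.mul continuous_id).tendsto 0
    rw [mul_zero] at h
    exact h.mono_left nhdsWithin_le_nhds
  · filter_upwards [self_mem_nhdsWithin] with t ht
    exact mul_pos hc ht

lemma hasPos_smul_pos {f : X → Y} {x v : X} {L : Y} {c : ℝ} (hc : 0 < c)
    (h : HasPosDirDeriv f x v L) : HasPosDirDeriv f x (c • v) (c • L) := by
  unfold HasPosDirDeriv at h ⊢
  have he : (fun t : ℝ => t⁻¹ • (f (x + t • (c • v)) - f x)) =
      (fun s : ℝ => c • (s⁻¹ • (f (x + s • v) - f x))) ∘ (fun t => c * t) := by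
    funext t
    simp only [Function.comp_apply]
    have h1 : t • (c • v) = (c*t) • v := by rw [smul_smul, mul_comm]
    rw [h1, smul_smul]
    congr 1
    rcases eq_or_ne t 0 with ht|ht
    · simp [ht]
    · rw [mul_inv_rev]
      field_simp
  rw [he]
  exact ((h.const_smul c).comp (tendsto_mul_pos hc))

/-- Uniform forward cone bound at points outside the P1 pieces. -/
lemma starU {f : X → Y} {x : X} {K δ : ℝ} (hK : 1 ≤ K) (hδ : 0 < δ)
    (hLip : LipAt f K δ x)
    (hx : ∀ ε r η : ℚ, x ∉ P1 f K δ (ε:ℝ) (r:ℝ) (η:ℝ))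
    {v : X} {L : Y} (hv : HasPosDirDeriv f x v L) :
    ∀ η : ℝ, 0 < η → ∃ r > 0, ∀ t (w : X), 0 < t → t < r → ‖w - v‖ ≤ η →
      ‖f (x + t • w) - f x - t • L‖ ≤ 10*K*η*t := by
  intro η hη
  by_contra hcon
  push_neg at hcon
  have hK0 : (0:ℝ) < K := lt_of_lt_of_le one_pos hK
  -- rational parameters
  obtain ⟨η₁, hη₁l, hη₁u⟩ := exists_rat_btwn (by linarith : η < 2*η)
  have hη₁0 : (0:ℝ) < η₁ := lt_trans hη hη₁l
  obtain ⟨ε, hε0, hεlt⟩ := exists_rat_btwn (by positivity : (0:ℝ) < K * η)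
  have hε0' : (0:ℝ) < ε := by exact_mod_cast hε0
  -- ray regularity radius
  have hray : ∀ᶠ t in 𝓝[>] (0:ℝ), ‖t⁻¹ • (f (x + t • v) - f x) - L‖ < (ε:ℝ) := by
    have := Metric.tendsto_nhds.mp hv (ε:ℝ) hε0'
    simpa [dist_eq_norm] using this
  obtain ⟨r₀, hr₀, hray'⟩ := eventually_pos_iff.mp hray
  obtain ⟨r, hr0, hrlt⟩ := exists_rat_btwn hr₀
  have hr0' : (0:ℝ) < r := hr0
  refine hx ε r η₁ ?_
  refine ⟨hK, hδ, hε0', hr0', hη₁0, ?_, hLip, v, L, ?_, ?_⟩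
  · calc (ε:ℝ) ≤ K * η := hεlt.le
      _ ≤ K * η₁ := mul_le_mul_of_nonneg_left hη₁l.le hK0.le
  · -- RegC with width 0
    intro t w ht0 htr hw
    have hwv : w = v := by rwa [norm_le_zero_iff, sub_eq_zero] at hw
    subst hwv
    have h1 := hray' t ht0 (htr.trans hrlt)
    rw [norm_sub_smul_eq ht0]
    calc t * ‖t⁻¹ • (f (x + t • w) - f x) - L‖ ≤ t * (ε:ℝ) :=
          mul_le_mul_of_nonneg_left h1.le ht0.le
      _ = (ε:ℝ) * t := mul_comm _ _
  · -- BadC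
    intro n
    obtain ⟨t, w, ht0, htn, hwv, hbig⟩ := hcon (1/(n+1 : ℝ)) (by positivity)
    refine ⟨t, w, ht0, htn, hwv.trans hη₁l.le, ?_⟩
    have h9 : 5*K*t*(η₁:ℝ) ≤ 5*K*t*(2*η) :=
      mul_le_mul_of_nonneg_left hη₁u.le (by positivity)
    calc 5*K*(η₁:ℝ) * t ≤ 10*K*η*t := by nlinarith [h9]
      _ ≤ ‖f (x + t • w) - f x - t • L‖ := hbig.le

end Cover

section Cover2

variable {X Y : Type*} [NormedAddCommGroup X] [NormedSpace ℝ X]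
  [NormedAddCommGroup Y] [NormedSpace ℝ Y]

/-- Uniform backward cone bound at points outside the P1 and P2 pieces. -/
lemma starB {f : X → Y} {x : X} {K δ : ℝ} (hK : 1 ≤ K) (hδ : 0 < δ)
    (hLip : LipAt f K δ x) (e : ℕ → X) (he : DenseRange e)
    (hx1 : ∀ ε r η : ℚ, x ∉ P1 f K δ (ε:ℝ) (r:ℝ) (η:ℝ))
    (hx2 : ∀ (r η : ℚ) (i : ℕ), x ∉ P2 f K δ (r:ℝ) (η:ℝ) (e i))
    {v : X} {L : Y} (hv : HasPosDirDeriv f x v L) :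
    ∀ η : ℝ, 0 < η → ∃ r > 0, ∀ t (w : X), 0 < t → t < r → ‖w - v‖ ≤ η →
      ‖f (x - t • w) - f x + t • L‖ ≤ 4*K*η*t := by
  intro η hη
  by_contra hcon
  push_neg at hcon
  have hK0 : (0:ℝ) < K := lt_of_lt_of_le one_pos hK
  obtain ⟨η₁, hη₁l, hη₁u⟩ := exists_rat_btwn (by linarith : η < 2*η)
  have hη₁0 : (0:ℝ) < η₁ := lt_trans hη hη₁l
  obtain ⟨r₂, hr₂, hreg⟩ := starU hK hδ hLip hx1 hv ((η₁:ℝ)/100) (by positivity)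
  obtain ⟨r, hr0, hrlt⟩ := exists_rat_btwn hr₂
  have hr0' : (0:ℝ) < r := hr0
  obtain ⟨i, hi⟩ := he.exists_dist_lt v (by positivity : (0:ℝ) < η₁/400)
  refine hx2 r η₁ i ⟨hK, hδ, hr0', hη₁0, hLip, v, L, ?_, ?_, ?_⟩
  · rw [dist_eq_norm] at hi
    exact hi.le
  · intro t w ht0 htr hw
    have h1 := hreg t w ht0 (htr.trans hrlt) hw
    calc ‖f (x + t • w) - f x - t • L‖ ≤ 10*K*((η₁:ℝ)/100)*t := h1
      _ = K*(η₁:ℝ)/10 * t := by ring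
  · intro n
    obtain ⟨t, w, ht0, htn, hwv, hbig⟩ := hcon (1/(n+1 : ℝ)) (by positivity)
    refine ⟨t, -w, ht0, htn, ?_, ?_⟩
    · have : -w - -v = v - w := by abel
      rw [this, norm_sub_rev]
      exact hwv.trans hη₁l.le
    · have hpt : x + t • (-w) = x - t • w := by
        rw [smul_neg]; abel
      have hval : f (x + t • (-w)) - f x - t • (-L) = f (x - t • w) - f x + t • L := by
        rw [hpt, smul_neg, sub_neg_eq_add]
      rw [hval]
      have h9 : 2*K*t*(η₁:ℝ) ≤ 2*K*t*(2*η) :=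
        mul_le_mul_of_nonneg_left hη₁u.le (by positivity)
      calc 2*K*(η₁:ℝ)*t ≤ 4*K*η*t := by nlinarith [h9]
        _ ≤ ‖f (x - t • w) - f x + t • L‖ := hbig.le

/-- additivity of one-sided derivatives outside the pieces, normalized case -/
lemma addl {f : X → Y} {x : X} {K δ : ℝ} (hK : 1 ≤ K) (hδ : 0 < δ)
    (hLip : LipAt f K δ x) (e : ℕ → X) (he : DenseRange e)
    (hx1 : ∀ ε r η : ℚ, x ∉ P1 f K δ (ε:ℝ) (r:ℝ) (η:ℝ))
    (hx3 : ∀ (ε r : ℚ) (j : ℕ), x ∉ P3 f K δ (ε:ℝ) (r:ℝ) (e j))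
    {u v : X} {Lu Lv : Y} (hu1 : ‖u‖ = 1)
    (hu : HasPosDirDeriv f x u Lu) (hv : HasPosDirDeriv f x v Lv) :
    HasPosDirDeriv f x (u+v) (Lu+Lv) := by
  by_contra hcon
  rw [HasPosDirDeriv, Metric.tendsto_nhds] at hcon
  push_neg at hcon
  obtain ⟨ε₀, hε₀, hfreq⟩ := hcon
  have hK0 : (0:ℝ) < K := lt_of_lt_of_le one_pos hK
  obtain ⟨ε, hε0, hεlt⟩ := exists_rat_btwn
    (lt_min (by positivity) hK0 : (0:ℝ) < min (ε₀/7) K)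
  have hε0' : (0:ℝ) < ε := hε0
  have hεε₀ : (ε:ℝ) ≤ ε₀/7 := (hεlt.trans_le (min_le_left _ _)).le
  have hεK : (ε:ℝ) ≤ K := (hεlt.trans_le (min_le_right _ _)).le
  obtain ⟨ru, hru, hregu⟩ := starU hK hδ hLip hx1 hu ((ε:ℝ)/(10*K)) (by positivity)
  obtain ⟨rv, hrv, hregv⟩ := starU hK hδ hLip hx1 hv ((ε:ℝ)/(10*K)) (by positivity)
  obtain ⟨r, hr0, hrlt⟩ := exists_rat_btwn (lt_min hru hrv : (0:ℝ) < min ru rv)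
  have hr0' : (0:ℝ) < r := hr0
  obtain ⟨j, hj⟩ := he.exists_dist_lt v (by positivity : (0:ℝ) < ε/(40*K))
  have hbound : ∀ {v' : X} {L' : Y},
      (∀ t (w : X), 0 < t → t < min ru rv → ‖w - v'‖ ≤ (ε:ℝ)/(10*K) →
        ‖f (x + t • w) - f x - t • L'‖ ≤ 10*K*((ε:ℝ)/(10*K))*t) →
      RegC f x v' L' (ε:ℝ) (r:ℝ) ((ε:ℝ)/(10*K)) := by
    intro v' L' hreg t w ht0 htr hw
    have h1 := hreg t w ht0 (htr.trans hrlt) hw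
    calc ‖f (x + t • w) - f x - t • L'‖ ≤ 10*K*((ε:ℝ)/(10*K))*t := h1
      _ = (ε:ℝ) * t := by field_simp
  refine hx3 ε r j ⟨hK, hδ, hε0', hεK, hr0', hLip, u, v, Lu, Lv, hu1, ?_, ?_, ?_, ?_⟩
  · rw [dist_eq_norm] at hj
    exact hj.le
  · exact hbound (fun t w ht0 htr hw => hregu t w ht0 (htr.trans_le (min_le_left _ _)) hw)
  · exact hbound (fun t w ht0 htr hw => hregv t w ht0 (htr.trans_le (min_le_right _ _)) hw)
  · intro n
    have hfr := frequently_pos_iff.mp hfreq (1/(n+1:ℝ)) (by positivity)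
    obtain ⟨t, ht0, htn, hbig⟩ := hfr
    refine ⟨t, u+v, ht0, htn, by simp, ?_⟩
    rw [dist_eq_norm] at hbig
    have h2 : ‖f (x + t • (u+v)) - f x - t • (Lu+Lv)‖ =
        t * ‖t⁻¹ • (f (x + t • (u+v)) - f x) - (Lu+Lv)‖ := norm_sub_smul_eq ht0
    rw [h2]
    calc 7*(ε:ℝ)*t ≤ t * ε₀ := by nlinarith
      _ ≤ t * ‖t⁻¹ • (f (x + t • (u+v)) - f x) - (Lu+Lv)‖ :=
          mul_le_mul_of_nonneg_left hbig ht0.le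

lemma hasPos_neg' {f : X → Y} {x : X} {K δ : ℝ} (hK : 1 ≤ K) (hδ : 0 < δ)
    (hLip : LipAt f K δ x) (e : ℕ → X) (he : DenseRange e)
    (hx1 : ∀ ε r η : ℚ, x ∉ P1 f K δ (ε:ℝ) (r:ℝ) (η:ℝ))
    (hx2 : ∀ (r η : ℚ) (i : ℕ), x ∉ P2 f K δ (r:ℝ) (η:ℝ) (e i))
    {v : X} {L : Y} (hv : HasPosDirDeriv f x v L) :
    HasPosDirDeriv f x (-v) (-L) := by
  have hK0 : (0:ℝ) < K := lt_of_lt_of_le one_pos hK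
  rw [HasPosDirDeriv, Metric.tendsto_nhds]
  intro ε' hε'
  obtain ⟨r, hr, hb⟩ := starB hK hδ hLip e he hx1 hx2 hv (ε'/(8*K)) (by positivity)
  rw [eventually_pos_iff]
  refine ⟨r, hr, fun t ht0 htr => ?_⟩
  have h1 := hb t v ht0 htr (by rw [sub_self, norm_zero]; positivity)
  rw [dist_eq_norm]
  have hpt : x + t • (-v) = x - t • v := by rw [smul_neg]; abel
  have he2 : t⁻¹ • (f (x + t • (-v)) - f x) - (-L) =
      t⁻¹ • ((f (x - t • v) - f x) + t • L) := by
    rw [hpt, smul_add, smul_smul, inv_mul_cancel₀ ht0.ne', one_smul, sub_neg_eq_add]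
  rw [he2, norm_smul, Real.norm_eq_abs, abs_of_pos (inv_pos.mpr ht0)]
  have h2 : t⁻¹ * ‖f (x - t • v) - f x + t • L‖ ≤ t⁻¹ * (4*K*(ε'/(8*K))*t) := by
    apply mul_le_mul_of_nonneg_left _ (inv_pos.mpr ht0).le
    exact h1
  calc t⁻¹ * ‖f (x - t • v) - f x + t • L‖ ≤ t⁻¹ * (4*K*(ε'/(8*K))*t) := h2
    _ = ε'/2 := by field_simp; ring
    _ < ε' := by linarith

end Cover2

section Assemble

variable {X Y : Type*} [NormedAddCommGroup X] [NormedSpace ℝ X]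
  [NormedAddCommGroup Y] [NormedSpace ℝ Y]

lemma hasDir_of_pos_neg {f : X → Y} {x v : X} {L : Y}
    (h1 : HasPosDirDeriv f x v L) (h2 : HasPosDirDeriv f x (-v) (-L)) :
    HasDirDeriv f x v L := by
  unfold HasDirDeriv
  have hsplit : 𝓝[≠] (0:ℝ) = 𝓝[<] (0:ℝ) ⊔ 𝓝[>] (0:ℝ) := by
    rw [← Iio_union_Ioi, nhdsWithin_union]
  rw [hsplit, tendsto_sup]
  refine ⟨?_, h1⟩
  have hmap : Tendsto (fun t : ℝ => -t) (𝓝[<] (0:ℝ)) (𝓝[>] (0:ℝ)) := by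
    rw [tendsto_nhdsWithin_iff]
    constructor
    · have h : Tendsto (fun t : ℝ => -t) (𝓝 0) (𝓝 (-0)) := continuous_neg.tendsto 0
      rw [neg_zero] at h
      exact h.mono_left nhdsWithin_le_nhds
    · filter_upwards [self_mem_nhdsWithin] with t ht
      exact mem_Ioi.mpr (neg_pos.mpr (mem_Iio.mp ht))
  have hcomp := h2.comp hmap
  have heq : ((fun t : ℝ => t⁻¹ • (f (x + t • (-v)) - f x)) ∘ (fun t : ℝ => -t)) =
      fun t : ℝ => -(t⁻¹ • (f (x + t • v) - f x)) := by
    funext t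
    simp only [Function.comp_apply]
    have e1 : (-t) • (-v) = t • v := by rw [smul_neg, neg_smul, neg_neg]
    rw [e1, inv_neg, neg_smul]
  rw [heq] at hcomp
  have := hcomp.neg
  simpa using this

lemma goodpt [CompleteSpace Y] {f : X → Y} {x : X} {K δ : ℝ} (hK : 1 ≤ K) (hδ : 0 < δ)
    (hLip : LipAt f K δ x) (e : ℕ → X) (he : DenseRange e)
    (hx1 : ∀ ε r η : ℚ, x ∉ P1 f K δ (ε:ℝ) (r:ℝ) (η:ℝ))
    (hx2 : ∀ (r η : ℚ) (i : ℕ), x ∉ P2 f K δ (r:ℝ) (η:ℝ) (e i))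
    (hx3 : ∀ (ε r : ℚ) (j : ℕ), x ∉ P3 f K δ (ε:ℝ) (r:ℝ) (e j))
    (S : Set X) (hS : Dense ((Submodule.span ℝ S : Submodule ℝ X) : Set X))
    (hder : ∀ u ∈ S, ∃ L, HasPosDirDeriv f x u L) :
    ∃ L : X →L[ℝ] Y, ∀ v, HasDirDeriv f x v (L v) := by
  classical
  have hK0 : (0:ℝ) < K := lt_of_lt_of_le one_pos hK
  -- general additivity
  have hadd : ∀ {u v : X} {Lu Lv : Y}, HasPosDirDeriv f x u Lu → HasPosDirDeriv f x v Lv →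
      HasPosDirDeriv f x (u+v) (Lu+Lv) := by
    intro u v Lu Lv hu hv
    rcases eq_or_ne u 0 with h0 | h0
    · have hLu0 : Lu = 0 := by
        rw [h0] at hu
        exact hasPos_unique hu (hasPos_zero f x)
      rw [h0, hLu0, zero_add, zero_add]
      exact hv
    · have hnu : 0 < ‖u‖ := norm_pos_iff.mpr h0
      have hc0 : 0 < ‖u‖⁻¹ := inv_pos.mpr hnu
      have hu' := hasPos_smul_pos hc0 hu
      have hv' := hasPos_smul_pos hc0 hv
      have hcu1 : ‖‖u‖⁻¹ • u‖ = 1 := by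
        rw [norm_smul, Real.norm_eq_abs, abs_of_pos hc0]
        field_simp
      have hsum := addl hK hδ hLip e he hx1 hx3 hcu1 hu' hv'
      have hback := hasPos_smul_pos hnu hsum
      have he1 : ‖u‖ • (‖u‖⁻¹ • u + ‖u‖⁻¹ • v) = u + v := by
        rw [smul_add, smul_smul, smul_smul, mul_inv_cancel₀ hnu.ne', one_smul, one_smul]
      have he2 : ‖u‖ • (‖u‖⁻¹ • Lu + ‖u‖⁻¹ • Lv) = Lu + Lv := by
        rw [smul_add, smul_smul, smul_smul, mul_inv_cancel₀ hnu.ne', one_smul, one_smul]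
      rwa [he1, he2] at hback
  have hneg : ∀ {v : X} {L : Y}, HasPosDirDeriv f x v L → HasPosDirDeriv f x (-v) (-L) :=
    fun hv => hasPos_neg' hK hδ hLip e he hx1 hx2 hv
  have hsmul : ∀ (c : ℝ) {v : X} {L : Y}, HasPosDirDeriv f x v L →
      HasPosDirDeriv f x (c • v) (c • L) := by
    intro c v L hv
    rcases lt_trichotomy c 0 with hc | hc | hc
    · have h1 := hasPos_smul_pos (by linarith : (0:ℝ) < -c) (hneg hv)
      have e1 : (-c) • (-v) = c • v := by rw [smul_neg, neg_smul, neg_neg]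
      have e2 : (-c) • (-L) = c • L := by rw [smul_neg, neg_smul, neg_neg]
      rwa [e1, e2] at h1
    · rw [hc, zero_smul, zero_smul]
      exact hasPos_zero f x
    · exact hasPos_smul_pos hc hv
  -- derivative exists on the span
  have hspan : ∀ w ∈ Submodule.span ℝ S, ∃ L, HasPosDirDeriv f x w L := by
    intro w hw
    induction hw using Submodule.span_induction with
    | mem y hy => exact hder y hy
    | zero => exact ⟨0, hasPos_zero f x⟩
    | add y z _ _ hy' hz' =>
        obtain ⟨Ly, h1⟩ := hy'
        obtain ⟨Lz, h2⟩ := hz'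
        exact ⟨Ly+Lz, hadd h1 h2⟩
    | smul c y _ hy' =>
        obtain ⟨Ly, h1⟩ := hy'
        exact ⟨c • Ly, hsmul c h1⟩
  -- bound
  have hbound : ∀ {w : X} {L : Y}, HasPosDirDeriv f x w L → ‖L‖ ≤ K * ‖w‖ := by
    intro w L hw
    have htd : Tendsto (fun t : ℝ => ‖t⁻¹ • (f (x + t • w) - f x)‖) (𝓝[>] (0:ℝ)) (𝓝 ‖L‖) :=
      hw.norm
    apply le_of_tendsto htd
    rw [eventually_pos_iff]
    refine ⟨δ/(‖w‖+1), by positivity, fun t ht0 htr => ?_⟩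
    have hwd : t * ‖w‖ < δ := by
      have h5 : t * (‖w‖+1) < δ := (lt_div_iff₀ (by positivity)).mp htr
      nlinarith [norm_nonneg w]
    have hl := hLip (x + t • w) (by
      rw [add_sub_cancel_left, norm_smul, Real.norm_eq_abs, abs_of_pos ht0]
      exact hwd)
    rw [add_sub_cancel_left, norm_smul, Real.norm_eq_abs, abs_of_pos ht0] at hl
    rw [norm_smul, Real.norm_eq_abs, abs_of_pos (inv_pos.mpr ht0)]
    calc t⁻¹ * ‖f (x + t • w) - f x‖ ≤ t⁻¹ * (K * (t * ‖w‖)) :=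
          mul_le_mul_of_nonneg_left hl (inv_pos.mpr ht0).le
      _ = K * ‖w‖ := by field_simp
  -- derivative exists everywhere
  have hX : ∀ v : X, ∃ L, HasPosDirDeriv f x v L := by
    intro v
    have hap : ∀ n : ℕ, ∃ w, w ∈ (Submodule.span ℝ S : Submodule ℝ X) ∧
        dist v w < 1/(n+1:ℝ) := by
      intro n
      obtain ⟨w, hw1, hw2⟩ := hS.exists_dist_lt v (by positivity : (0:ℝ) < 1/(n+1:ℝ))
      exact ⟨w, hw1, hw2⟩
    choose un hun hund using hap
    choose Ln hLn using fun n => hspan (un n) (hun n)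
    have hcauchy : CauchySeq Ln := by
      refine cauchySeq_of_le_tendsto_0 (fun N => 2*K*(1/(N+1:ℝ))) ?_ ?_
      · intro n m N hn hm
        have hsub : HasPosDirDeriv f x (un n - un m) (Ln n - Ln m) := by
          have h1 := hadd (hLn n) (hneg (hLn m))
          rwa [← sub_eq_add_neg, ← sub_eq_add_neg] at h1
        have hb := hbound hsub
        have htri : ‖un n - un m‖ ≤ dist v (un n) + dist v (un m) := by
          rw [← dist_eq_norm]
          exact dist_triangle_left _ _ v
        have h1n : dist v (un n) < 1/(N+1:ℝ) := by
          refine (hund n).trans_le ?_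
          apply one_div_le_one_div_of_le (by positivity)
          have : (N:ℝ) ≤ n := by exact_mod_cast hn
          linarith
        have h1m : dist v (un m) < 1/(N+1:ℝ) := by
          refine (hund m).trans_le ?_
          apply one_div_le_one_div_of_le (by positivity)
          have : (N:ℝ) ≤ m := by exact_mod_cast hm
          linarith
        rw [dist_eq_norm]
        calc ‖Ln n - Ln m‖ ≤ K * ‖un n - un m‖ := hb
          _ ≤ K * (dist v (un n) + dist v (un m)) :=
              mul_le_mul_of_nonneg_left htri hK0.le
          _ ≤ 2*K*(1/(N+1:ℝ)) := by nlinarith [h1n.le, h1m.le]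
      · have h := tendsto_one_div_add_atTop_nhds_zero_nat.const_mul (2*K)
        simpa using h
    obtain ⟨Li, hLi⟩ := cauchySeq_tendsto_of_complete hcauchy
    refine ⟨Li, ?_⟩
    rw [HasPosDirDeriv, Metric.tendsto_nhds]
    intro ε' hε'
    have hev : ∀ᶠ n in atTop, dist (Ln n) Li < ε'/2 :=
      Metric.tendsto_nhds.mp hLi (ε'/2) (by positivity)
    have hev2 : ∀ᶠ n : ℕ in atTop, (1:ℝ)/((n:ℝ)+1) < ε'/(40*K) := by
      obtain ⟨N, hN⟩ := exists_nat_one_div_lt (by positivity : (0:ℝ) < ε'/(40*K))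
      filter_upwards [eventually_ge_atTop N] with n hn
      refine lt_of_le_of_lt ?_ hN
      apply one_div_le_one_div_of_le (by positivity)
      have : (N:ℝ) ≤ n := by exact_mod_cast hn
      linarith
    obtain ⟨n, h1n, h2n⟩ := (hev.and hev2).exists
    obtain ⟨r, hr, hb⟩ := starU hK hδ hLip hx1 (hLn n) (ε'/(40*K)) (by positivity)
    rw [eventually_pos_iff]
    refine ⟨r, hr, fun t ht0 htr => ?_⟩
    have hvn : ‖v - un n‖ ≤ ε'/(40*K) := by
      rw [← dist_eq_norm]
      exact ((hund n).trans h2n).le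
    have h3 := hb t v ht0 htr hvn
    have h4 : dist (t⁻¹ • (f (x + t • v) - f x)) (Ln n) ≤ ε'/4 := by
      rw [dist_eq_norm]
      have h5 : ‖f (x + t • v) - f x - t • Ln n‖ =
          t * ‖t⁻¹ • (f (x + t • v) - f x) - Ln n‖ := norm_sub_smul_eq ht0
      rw [h5] at h3
      have h6 : t * ‖t⁻¹ • (f (x + t • v) - f x) - Ln n‖ ≤ t * (ε'/4) := by
        refine h3.trans ?_
        have : 10*K*(ε'/(40*K)) = ε'/4 := by field_simp; ring
        rw [mul_comm _ t, this]
      exact le_of_mul_le_mul_left h6 ht0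
    calc dist (t⁻¹ • (f (x + t • v) - f x)) Li
        ≤ dist (t⁻¹ • (f (x + t • v) - f x)) (Ln n) + dist (Ln n) Li := dist_triangle _ _ _
      _ < ε'/4 + ε'/2 := by
          have := h4
          exact add_lt_add_of_le_of_lt this h1n
      _ < ε' := by linarith
  -- define the linear map
  choose g hg using hX
  have gadd : ∀ a b : X, g (a + b) = g a + g b :=
    fun a b => hasPos_unique (hg _) (hadd (hg a) (hg b))
  have gsmul : ∀ (c : ℝ) (a : X), g (c • a) = c • g a :=
    fun c a => hasPos_unique (hg _) (hsmul c (hg a))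
  let ℓ : X →ₗ[ℝ] Y :=
    { toFun := g
      map_add' := gadd
      map_smul' := by intro c a; simp [gsmul] }
  refine ⟨LinearMap.mkContinuous ℓ K (fun v => hbound (hg v)), fun v => ?_⟩
  have hLcv : (LinearMap.mkContinuous ℓ K (fun v => hbound (hg v))) v = g v := rfl
  rw [hLcv]
  exact hasDir_of_pos_neg (hg v) (hneg (hg v))

end Assemble

section Sigma

variable {X : Type*} [NormedAddCommGroup X] [NormedSpace ℝ X]

lemma dp_mono {A B : Set X} (h : DirectionallyPorous A) (hBA : B ⊆ A) :
    DirectionallyPorous B := by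
  intro x hx
  obtain ⟨v, hv, p, hp, t, ht0, htt, hball⟩ := h x (hBA hx)
  refine ⟨v, hv, p, hp, t, ht0, htt, fun n => ?_⟩
  rw [eq_empty_iff_forall_notMem]
  intro z hz
  have hzz : z ∈ ball (x + t n • v) (p * t n) ∩ A := ⟨hz.1, hBA hz.2⟩
  rw [hball n] at hzz
  exact hzz

lemma sigmaDP_iUnion {ι : Type} [Countable ι] (s : ι → Set X)
    (h : ∀ i, DirectionallyPorous (s i)) : SigmaDirectionallyPorous (⋃ i, s i) := by
  obtain ⟨g, hg⟩ := exists_injective_nat ι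
  refine ⟨fun n => ⋃ (i : ι) (_ : g i = n), s i, ?_, ?_⟩
  · intro n
    by_cases hn : ∃ i, g i = n
    · obtain ⟨i, hgi⟩ := hn
      refine dp_mono (h i) ?_
      intro y hy
      simp only [mem_iUnion] at hy
      obtain ⟨i', hgi', hyi⟩ := hy
      cases hg (hgi'.trans hgi.symm)
      exact hyi
    · intro x hx
      exfalso
      simp only [mem_iUnion] at hx
      exact hn ⟨hx.choose, hx.choose_spec.1⟩
  · ext y
    simp only [mem_iUnion]
    constructor
    · rintro ⟨i, hi⟩
      exact ⟨g i, i, rfl, hi⟩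
    · rintro ⟨n, i, _, hi⟩
      exact ⟨i, hi⟩

end Sigma

theorem stmt14 {X Y : Type*} [NormedAddCommGroup X] [NormedSpace ℝ X] [CompleteSpace X]
    [TopologicalSpace.SeparableSpace X]
    [NormedAddCommGroup Y] [NormedSpace ℝ Y] [CompleteSpace Y]
    (G : Set X) (hG : IsOpen G) (f : X → Y) :
    ∃ A : Set X, SigmaDirectionallyPorous A ∧ A ⊆ G ∧
      ∀ x ∈ G \ A, LipschitzAtPt f x →
        ∀ S : Set X, Dense ((Submodule.span ℝ S : Submodule ℝ X) : Set X) →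
          (∀ u ∈ S, ∃ L, HasPosDirDeriv f x u L) →
          ∃ L : X →L[ℝ] Y, ∀ v, HasDirDeriv f x v (L v) := by

  classical
  haveI : Nonempty X := ⟨0⟩
  set e := TopologicalSpace.denseSeq X with he_def
  have he : DenseRange e := TopologicalSpace.denseRange_denseSeq X
  let piece : ((ℚ×ℚ×ℚ×ℚ×ℚ) ⊕ ((ℚ×ℚ×ℚ×ℚ)×ℕ) ⊕ ((ℚ×ℚ×ℚ×ℚ)×ℕ)) → Set X := fun i =>
    (Sum.elim
      (fun q : ℚ×ℚ×ℚ×ℚ×ℚ =>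
        P1 f (q.1:ℝ) (q.2.1:ℝ) (q.2.2.1:ℝ) (q.2.2.2.1:ℝ) (q.2.2.2.2:ℝ))
      (Sum.elim
        (fun q : (ℚ×ℚ×ℚ×ℚ)×ℕ =>
          P2 f (q.1.1:ℝ) (q.1.2.1:ℝ) (q.1.2.2.1:ℝ) (q.1.2.2.2:ℝ) (e q.2))
        (fun q : (ℚ×ℚ×ℚ×ℚ)×ℕ =>
          P3 f (q.1.1:ℝ) (q.1.2.1:ℝ) (q.1.2.2.1:ℝ) (q.1.2.2.2:ℝ) (e q.2))) i) ∩ G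
  refine ⟨⋃ i, piece i, ?_, ?_, ?_⟩
  · apply sigmaDP_iUnion
    rintro (q | q | q)
    · exact dp_mono (dp_P1 f _ _ _ _ _) inter_subset_left
    · exact dp_mono (dp_P2 f _ _ _ _ _) inter_subset_left
    · exact dp_mono (dp_P3 f _ _ _ _ _) inter_subset_left
  · exact iUnion_subset (fun i => inter_subset_right)
  · rintro x ⟨hxG, hxA⟩ hLipAt S hS hder
    have hx : ∀ i, x ∉ piece i := fun i hi => hxA (mem_iUnion.mpr ⟨i, hi⟩)
    obtain ⟨K₀, δ₀, hδ₀, hl⟩ := hLipAt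
    obtain ⟨K, hKgt⟩ := exists_rat_gt (max K₀ 1)
    obtain ⟨δq, hδq0, hδqlt⟩ := exists_rat_btwn hδ₀
    have hδq0' : (0:ℝ) < δq := hδq0
    have hK1 : (1:ℝ) ≤ (K:ℝ) := le_of_lt (lt_of_le_of_lt (le_max_right _ _) hKgt)
    have hLip : LipAt f (K:ℝ) (δq:ℝ) x := by
      intro y hy
      refine (hl y (hy.trans hδqlt)).trans ?_
      apply mul_le_mul_of_nonneg_right _ (norm_nonneg _)
      exact le_of_lt (lt_of_le_of_lt (le_max_left _ _) hKgt)
    have hx1 : ∀ ε r η : ℚ, x ∉ P1 f (K:ℝ) (δq:ℝ) (ε:ℝ) (r:ℝ) (η:ℝ) :=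
      fun ε r η hmem => hx (Sum.inl (K, δq, ε, r, η)) ⟨hmem, hxG⟩
    have hx2 : ∀ (r η : ℚ) (i : ℕ), x ∉ P2 f (K:ℝ) (δq:ℝ) (r:ℝ) (η:ℝ) (e i) :=
      fun r η i hmem => hx (Sum.inr (Sum.inl ((K, δq, r, η), i))) ⟨hmem, hxG⟩
    have hx3 : ∀ (ε r : ℚ) (j : ℕ), x ∉ P3 f (K:ℝ) (δq:ℝ) (ε:ℝ) (r:ℝ) (e j) :=
      fun ε r j hmem => hx (Sum.inr (Sum.inr ((K, δq, ε, r), j))) ⟨hmem, hxG⟩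
    exact goodpt hK1 hδq0' hLip e he hx1 hx2 hx3 S hS hder
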